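/- Let (X, d) be a finite metric space with |X| = n, let x : Fin n → X be a priority ordering (a bijection; x j has priority (j : ℕ) + 1), and let α : ℕ → ℝ be a proper priority function. Then there exists a function ρ : X → X → ℝ such that: (i) ρ is symmetric (ρ a b = ρ b a) and ρ a a = 0 for all a; (ii) ρ satisfies the strong (ultrametric) triangle inequality ρ a c ≤ max (ρ a b) (ρ b c) for all a, b, c ∈ X; (iii) the embedding is non-contractive: d(a, b) ≤ ρ a b for all a, b ∈ X; and (iv) for all i, j : Fin n, ρ (x i) (x j) ≤ 2 · α (min (i : ℕ) (j : ℕ) + 1) · d(x i, x j). That is, X embeds into an ultrametric with prioritized distortion 2α(j). -/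

import Mathlib

/-- A proper priority function: positive on `i ≥ 1`, nondecreasing (for `i ≥ 1`), and
with `∑_{i=1}^∞ 1/α(i)` summable with sum `< 1`. -/
def IsProperPriority (α : ℕ → ℝ) : Prop :=
  (∀ i : ℕ, 1 ≤ i → 0 < α i) ∧
  (∀ i j : ℕ, 1 ≤ i → i ≤ j → α i ≤ α j) ∧
  Summable (fun i : ℕ => 1 / α (i + 1)) ∧
  ∑' i : ℕ, 1 / α (i + 1) < 1


open Finset
open scoped NNReal

section UltraAux

variable {X : Type*}

noncomputable def chainCost (w : X → X → ℝ≥0) (m : ℕ) (z : ℕ → X) : ℝ≥0 :=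
  (Finset.range m).sup fun k => w (z k) (z (k + 1))

def chainSet (w : X → X → ℝ≥0) (u v : X) : Set ℝ≥0 :=
  {c | ∃ m : ℕ, ∃ z : ℕ → X, z 0 = u ∧ z m = v ∧ chainCost w m z = c}

noncomputable def rho0 (w : X → X → ℝ≥0) (u v : X) : ℝ≥0 :=
  sInf (chainSet w u v)

lemma w_mem_chainSet (w : X → X → ℝ≥0) (u v : X) : w u v ∈ chainSet w u v := by
  refine ⟨1, fun k => if k = 0 then u else v, by simp, by simp, ?_⟩
  simp [chainCost]

lemma rho0_le (w : X → X → ℝ≥0) (u v : X) : rho0 w u v ≤ w u v :=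
  csInf_le (OrderBot.bddBelow _) (w_mem_chainSet w u v)

lemma rho0_self (w : X → X → ℝ≥0) (u : X) : rho0 w u u = 0 :=
  le_antisymm (csInf_le (OrderBot.bddBelow _)
    ⟨0, fun _ => u, rfl, rfl, by simp [chainCost]⟩) zero_le

lemma sup_le_sup_of_map {s t : Finset ℕ} (f g : ℕ → ℝ≥0)
    (h : ∀ k ∈ s, ∃ j ∈ t, f k = g j) : s.sup f ≤ t.sup g :=
  Finset.sup_le fun k hk => by
    obtain ⟨j, hj, e⟩ := h k hk
    exact e ▸ Finset.le_sup hj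

lemma chainSet_symm_subset (w : X → X → ℝ≥0) (hw : ∀ a b, w a b = w b a) (u v : X) :
    chainSet w u v ⊆ chainSet w v u := by
  rintro c ⟨m, z, h0, hm, rfl⟩
  refine ⟨m, fun k => z (m - k), by simpa using hm, by simpa using h0, ?_⟩
  unfold chainCost
  apply le_antisymm
  · apply sup_le_sup_of_map
    intro k hk
    rw [Finset.mem_range] at hk
    refine ⟨m - 1 - k, Finset.mem_range.2 (by omega), ?_⟩
    show w (z (m - k)) (z (m - (k + 1))) = w (z (m - 1 - k)) (z (m - 1 - k + 1))
    have e1 : m - (k + 1) = m - 1 - k := by omega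
    have e2 : m - k = (m - 1 - k) + 1 := by omega
    rw [e1, e2, hw]
  · apply sup_le_sup_of_map
    intro k hk
    rw [Finset.mem_range] at hk
    refine ⟨m - 1 - k, Finset.mem_range.2 (by omega), ?_⟩
    show w (z k) (z (k + 1)) = w (z (m - (m - 1 - k))) (z (m - (m - 1 - k + 1)))
    have e1 : m - (m - 1 - k) = k + 1 := by omega
    have e2 : m - (m - 1 - k + 1) = k := by omega
    rw [e1, e2, hw]

lemma rho0_symm (w : X → X → ℝ≥0) (hw : ∀ a b, w a b = w b a) (u v : X) :
    rho0 w u v = rho0 w v u :=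
  congrArg sInf (Set.Subset.antisymm (chainSet_symm_subset w hw u v)
    (chainSet_symm_subset w hw v u))

lemma edge_le_chainCost (w : X → X → ℝ≥0) {m k : ℕ} (z : ℕ → X) (h : k < m) :
    w (z k) (z (k + 1)) ≤ chainCost w m z :=
  Finset.le_sup (f := fun k => w (z k) (z (k + 1))) (Finset.mem_range.2 h)

lemma rho0_mem [Fintype X] (w : X → X → ℝ≥0) (u v : X) :
    rho0 w u v ∈ chainSet w u v := by
  apply Set.Nonempty.csInf_mem ⟨w u v, w_mem_chainSet w u v⟩
  apply Set.Finite.subset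
    ((Set.finite_range fun p : X × X => w p.1 p.2).insert 0)
  rintro c ⟨m, z, -, -, rfl⟩
  rcases Nat.eq_zero_or_pos m with h | h
  · subst h; simp [chainCost]
  · have hne : (Finset.range m).Nonempty := ⟨0, Finset.mem_range.2 h⟩
    obtain ⟨b, hb, he⟩ := Finset.exists_mem_eq_sup' hne (fun k => w (z k) (z (k + 1)))
    exact Set.mem_insert_of_mem _ ⟨(z b, z (b + 1)), by
      rw [chainCost, ← Finset.sup'_eq_sup hne]; exact he.symm⟩

lemma rho0_ultra [Fintype X] (w : X → X → ℝ≥0) (a b c : X) :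
    rho0 w a c ≤ max (rho0 w a b) (rho0 w b c) := by
  obtain ⟨m1, z1, e10, e11, ec1⟩ := rho0_mem w a b
  obtain ⟨m2, z2, e20, e21, ec2⟩ := rho0_mem w b c
  set z : ℕ → X := fun k => if k < m1 then z1 k else z2 (k - m1) with hz
  have hz0 : z 0 = a := by
    rcases Nat.eq_zero_or_pos m1 with h | h
    · have hab : a = b := by rw [← e10, ← e11, h]
      simp [hz, h, e20, hab]
    · simp [hz, h, e10]
  have hzm : z (m1 + m2) = c := by
    have h1 : ¬ (m1 + m2 < m1) := by omega
    simp [hz, h1, e21]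
  have hcost : chainCost w (m1 + m2) z ≤ max (chainCost w m1 z1) (chainCost w m2 z2) := by
    unfold chainCost
    apply Finset.sup_le
    intro k hk
    rw [Finset.mem_range] at hk
    by_cases h : k < m1
    · have hzk : z k = z1 k := by simp [hz, h]
      have hzk1 : z (k + 1) = z1 (k + 1) := by
        by_cases h' : k + 1 < m1
        · simp [hz, h']
        · have e : k + 1 = m1 := by omega
          have : z (k + 1) = z2 0 := by simp [hz, h', e]
          rw [this, e20, ← e11, e]
      calc w (z k) (z (k + 1)) = w (z1 k) (z1 (k + 1)) := by rw [hzk, hzk1]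
        _ ≤ chainCost w m1 z1 := edge_le_chainCost w z1 h
        _ ≤ _ := le_max_left _ _
    · have hm1k : m1 ≤ k := le_of_not_gt h
      have hzk : z k = z2 (k - m1) := by simp [hz, h]
      have hzk1 : z (k + 1) = z2 (k - m1 + 1) := by
        have h' : ¬ (k + 1 < m1) := by omega
        have e : k + 1 - m1 = k - m1 + 1 := by omega
        simp [hz, h', e]
      calc w (z k) (z (k + 1)) = w (z2 (k - m1)) (z2 (k - m1 + 1)) := by rw [hzk, hzk1]
        _ ≤ chainCost w m2 z2 := edge_le_chainCost w z2 (by omega)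
        _ ≤ _ := le_max_right _ _
  calc rho0 w a c ≤ chainCost w (m1 + m2) z :=
        csInf_le (OrderBot.bddBelow _) ⟨m1 + m2, z, hz0, hzm, rfl⟩
    _ ≤ max (chainCost w m1 z1) (chainCost w m2 z2) := hcost
    _ = max (rho0 w a b) (rho0 w b c) := by rw [ec1, ec2]

lemma rho0_ge (w : X → X → ℝ≥0) (u v : X) (D : ℝ≥0)
    (hbase : ∀ m : ℕ, ∀ z : ℕ → X,
      (∀ i j, i ≤ m → j ≤ m → z i = z j → i = j) → z 0 = u → z m = v →
      D ≤ chainCost w m z) :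
    D ≤ rho0 w u v := by
  have key : ∀ m : ℕ, ∀ z : ℕ → X, z 0 = u → z m = v → D ≤ chainCost w m z := by
    intro m
    induction m using Nat.strong_induction_on with
    | _ m ih =>
      intro z h0 hm
      by_cases hdup : ∃ i j, i < j ∧ j ≤ m ∧ z i = z j
      · obtain ⟨i, j, hij, hjm, hzij⟩ := hdup
        set m' := m - (j - i) with hm'
        set z' : ℕ → X := fun k => if k ≤ i then z k else z (k + (j - i)) with hz'
        have h0' : z' 0 = u := by simp [hz', h0]
        have hm'v : z' m' = v := by
          by_cases h : m' ≤ i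
          · have e1 : m' = i := by omega
            have e2 : j = m := by omega
            have : z' m' = z m' := by simp [hz', h]
            rw [this, e1, hzij, e2, hm]
          · have : z' m' = z (m' + (j - i)) := by simp [hz', h]
            have e : m' + (j - i) = m := by omega
            rw [this, e, hm]
        have hcost' : chainCost w m' z' ≤ chainCost w m z := by
          unfold chainCost
          apply sup_le_sup_of_map
          intro k hk
          rw [Finset.mem_range] at hk
          by_cases h1 : k + 1 ≤ i
          · refine ⟨k, Finset.mem_range.2 (by omega), ?_⟩
            show w (z' k) (z' (k + 1)) = _
            have hki' : k ≤ i := by omega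
            have a1 : z' k = z k := by simp [hz', hki']
            have a2 : z' (k + 1) = z (k + 1) := by simp [hz', h1]
            rw [a1, a2]
          · by_cases h2 : k ≤ i
            · have hki : k = i := by omega
              refine ⟨j, Finset.mem_range.2 (by omega), ?_⟩
              show w (z' k) (z' (k + 1)) = _
              have a1 : z' k = z j := by
                have : z' k = z k := by simp [hz', h2]
                rw [this, hki, hzij]
              have a2 : z' (k + 1) = z (j + 1) := by
                have : z' (k + 1) = z (k + 1 + (j - i)) := by simp [hz', h1]
                rw [this]
                congr 1
                omega
              rw [a1, a2]
            · refine ⟨k + (j - i), Finset.mem_range.2 (by omega), ?_⟩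
              show w (z' k) (z' (k + 1)) = _
              have a1 : z' k = z (k + (j - i)) := by simp [hz', h2]
              have a2 : z' (k + 1) = z (k + (j - i) + 1) := by
                have h1' : ¬ (k + 1 ≤ i) := h1
                have : z' (k + 1) = z (k + 1 + (j - i)) := by simp [hz', h1']
                rw [this]
                congr 1
                omega
              rw [a1, a2]
        exact le_trans (ih m' (by omega) z' h0' hm'v) hcost'
      · push_neg at hdup
        apply hbase m z ?_ h0 hm
        intro i j hi hj he
        by_contra hne
        rcases lt_or_gt_of_ne hne with h | h
        · exact hdup i j h hj he
        · exact hdup j i h hi he.symm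
  apply le_csInf ⟨w u v, w_mem_chainSet w u v⟩
  rintro c ⟨m, z, h0, hm, rfl⟩
  exact key m z h0 hm

end UltraAux

/-- Prioritized embedding of a finite metric space into a single ultrametric with
prioritized distortion `2α(j)`: the ultrametric `ρ` dominates `d` and satisfies
`ρ(x_i, x_j) ≤ 2·α(min(i,j)+1)·d(x_i, x_j)`. -/
theorem prioritized_embedding_into_ultrametric
    (X : Type*) [MetricSpace X] [Fintype X] (n : ℕ) (hcard : Fintype.card X = n)
    (x : Fin n ≃ X) (α : ℕ → ℝ) (hα : IsProperPriority α) :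
    ∃ ρ : X → X → ℝ,
      (∀ a b : X, ρ a b = ρ b a) ∧
      (∀ a : X, ρ a a = 0) ∧
      (∀ a b c : X, ρ a c ≤ max (ρ a b) (ρ b c)) ∧
      (∀ a b : X, dist a b ≤ ρ a b) ∧
      (∀ i j : Fin n,
        ρ (x i) (x j) ≤ 2 * α (min (i : ℕ) (j : ℕ) + 1) * dist (x i) (x j)) := by
  classical
  obtain ⟨hpos, hmono, hsum, hlt⟩ := hα
  set rank : X → ℕ := fun a => ((x.symm a : Fin n) : ℕ) with hrank
  have rank_inj : ∀ a b : X, rank a = rank b → a = b := by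
    intro a b h
    exact x.symm.injective (Fin.val_injective h)
  have hα1 : ∀ t : ℕ, 0 < α (t + 1) := fun t => hpos (t + 1) (by omega)
  set β : X → X → ℝ := fun a b => 2 * α (min (rank a) (rank b) + 1) * dist a b with hβ
  have hβnn : ∀ a b, 0 ≤ β a b := by
    intro a b
    have h1 := hα1 (min (rank a) (rank b))
    simp only [hβ]
    exact mul_nonneg (mul_nonneg zero_le_two h1.le) dist_nonneg
  set w : X → X → ℝ≥0 := fun a b => Real.toNNReal (β a b) with hw
  have hwcoe : ∀ a b, (w a b : ℝ) = β a b := fun a b => Real.coe_toNNReal _ (hβnn a b)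
  have hwsymm : ∀ a b, w a b = w b a := by
    intro a b
    simp only [hw, hβ]
    rw [min_comm, dist_comm]
  set f : ℕ → ℝ := fun i => 1 / α (i + 1) with hf
  have hf0 : ∀ i, 0 ≤ f i := fun i => by
    simp only [hf]
    exact one_div_nonneg.2 (hα1 i).le
  set T := ∑' i : ℕ, f i with hT
  -- the key lower bound on duplicate-free chains
  have hdom : ∀ u v : X, (nndist u v : ℝ≥0) ≤ rho0 w u v := by
    intro u v
    apply rho0_ge
    intro m z hinj h0 hm
    by_cases huv : u = v
    · subst huv
      simp [nndist_self]
    · by_contra hcon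
      push_neg at hcon
      have hm0 : m ≠ 0 := by
        rintro rfl
        exact huv (h0 ▸ hm ▸ rfl)
      have hD : (0 : ℝ) < dist u v := dist_pos.2 huv
      have hedge : ∀ k, k < m → β (z k) (z (k + 1)) < dist u v := by
        intro k hk
        have h1 : w (z k) (z (k + 1)) < nndist u v :=
          lt_of_le_of_lt (edge_le_chainCost w z hk) hcon
        have h2 : ((w (z k) (z (k + 1)) : ℝ≥0) : ℝ) < ((nndist u v : ℝ≥0) : ℝ) :=
          NNReal.coe_lt_coe.2 h1
        rwa [hwcoe, coe_nndist] at h2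
      set r : ℕ → ℕ := fun k => min (rank (z k)) (rank (z (k + 1))) with hr
      have hstep : ∀ k ∈ Finset.range m,
          dist (z k) (z (k + 1)) < dist u v / 2 * f (r k) := by
        intro k hk
        rw [Finset.mem_range] at hk
        have h2a : (0 : ℝ) < 2 * α (r k + 1) := by
          have := hα1 (r k); linarith
        have hed : 2 * α (r k + 1) * dist (z k) (z (k + 1)) < dist u v := hedge k hk
        have h3 : dist (z k) (z (k + 1)) < dist u v / (2 * α (r k + 1)) := by
          rw [lt_div_iff₀ h2a, mul_comm]
          exact hed
        have h4 : dist u v / (2 * α (r k + 1)) = dist u v / 2 * f (r k) := by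
          simp only [hf]
          field_simp
        rw [← h4]
        exact h3
      have hrprop : ∀ k1 k2, k1 < m → k2 < m → r k1 = r k2 →
          k1 = k2 ∨ k1 + 1 = k2 ∨ k2 + 1 = k1 := by
        intro k1 k2 h1 h2 he
        have pick : ∀ k, ∃ a, (a = k ∨ a = k + 1) ∧ rank (z a) = r k := by
          intro k
          rcases min_cases (rank (z k)) (rank (z (k + 1))) with ⟨h, -⟩ | ⟨h, -⟩
          · exact ⟨k, Or.inl rfl, h.symm⟩
          · exact ⟨k + 1, Or.inr rfl, h.symm⟩
        obtain ⟨a1, ha1, hr1⟩ := pick k1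
        obtain ⟨a2, ha2, hr2⟩ := pick k2
        have hz12 : z a1 = z a2 := rank_inj _ _ (by rw [hr1, hr2, he])
        have : a1 = a2 := hinj a1 a2 (by omega) (by omega) hz12
        omega
      have hcomb : ∑ k ∈ Finset.range m, f (r k) ≤ 2 * T := by
        have hone : ∀ s : Finset ℕ, s ⊆ Finset.range m →
            (∀ k1 ∈ s, ∀ k2 ∈ s, r k1 = r k2 → k1 = k2) →
            ∑ k ∈ s, f (r k) ≤ T := by
          intro s hs hinjs
          calc ∑ k ∈ s, f (r k) = ∑ i ∈ s.image r, f i := (Finset.sum_image hinjs).symm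
            _ ≤ T := Summable.sum_le_tsum _ (fun i _ => hf0 i) hsum
        have h1 : ∑ k ∈ (Finset.range m).filter (fun k => k % 2 = 0), f (r k) ≤ T := by
          apply hone _ (Finset.filter_subset _ _)
          intro k1 hk1 k2 hk2 he
          rw [Finset.mem_filter, Finset.mem_range] at hk1 hk2
          have := hrprop k1 k2 hk1.1 hk2.1 he
          omega
        have h2 : ∑ k ∈ (Finset.range m).filter (fun k => ¬ (k % 2 = 0)), f (r k) ≤ T := by
          apply hone _ (Finset.filter_subset _ _)
          intro k1 hk1 k2 hk2 he
          rw [Finset.mem_filter, Finset.mem_range] at hk1 hk2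
          have := hrprop k1 k2 hk1.1 hk2.1 he
          omega
        have hsplit := Finset.sum_filter_add_sum_filter_not (Finset.range m)
          (fun k => k % 2 = 0) (fun k => f (r k))
        linarith
      have hmne : (Finset.range m).Nonempty := Finset.nonempty_range_iff.2 hm0
      have hsum1 : dist u v ≤ ∑ k ∈ Finset.range m, dist (z k) (z (k + 1)) := by
        have := dist_le_range_sum_dist z m
        rwa [h0, hm] at this
      have hfin : dist u v < dist u v := by
        calc dist u v ≤ ∑ k ∈ Finset.range m, dist (z k) (z (k + 1)) := hsum1
          _ < ∑ k ∈ Finset.range m, dist u v / 2 * f (r k) :=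
              Finset.sum_lt_sum_of_nonempty hmne hstep
          _ = dist u v / 2 * ∑ k ∈ Finset.range m, f (r k) := (Finset.mul_sum _ _ _).symm
          _ ≤ dist u v / 2 * (2 * T) := by
              apply mul_le_mul_of_nonneg_left hcomb
              positivity
          _ = dist u v * T := by ring
          _ < dist u v * 1 := mul_lt_mul_of_pos_left hlt hD
          _ = dist u v := mul_one _
      exact lt_irrefl _ hfin
  refine ⟨fun a b => (rho0 w a b : ℝ), ?_, ?_, ?_, ?_, ?_⟩
  · intro a b
    show ((rho0 w a b : ℝ≥0) : ℝ) = ((rho0 w b a : ℝ≥0) : ℝ)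
    exact congrArg NNReal.toReal (rho0_symm w hwsymm a b)
  · intro a
    show ((rho0 w a a : ℝ≥0) : ℝ) = 0
    rw [rho0_self]
    simp
  · intro a b c
    have := rho0_ultra w a b c
    have h2 : ((rho0 w a c : ℝ≥0) : ℝ) ≤ ((max (rho0 w a b) (rho0 w b c) : ℝ≥0) : ℝ) :=
      NNReal.coe_le_coe.2 this
    rwa [NNReal.coe_max] at h2
  · intro a b
    have := NNReal.coe_le_coe.2 (hdom a b)
    rwa [coe_nndist] at this
  · intro i j
    have h1 : ((rho0 w (x i) (x j) : ℝ≥0) : ℝ) ≤ ((w (x i) (x j) : ℝ≥0) : ℝ) :=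
      NNReal.coe_le_coe.2 (rho0_le w (x i) (x j))
    rw [hwcoe] at h1
    have h2 : β (x i) (x j) = 2 * α (min (i : ℕ) (j : ℕ) + 1) * dist (x i) (x j) := by
      simp only [hβ, hrank, Equiv.symm_apply_apply]
    rwa [h2] at h1
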